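/- A norm ‖·‖ on M_n(ℂ) is an L-norm if and only if its dual norm ‖·‖_* is an M-norm. -/

import Mathlib

open Matrix BigOperators ComplexOrder

/-- Square complex matrices. -/
abbrev Mat (n : ℕ) := Matrix (Fin n) (Fin n) ℂ

/-- `N` is a norm on `Mat n`. -/
def IsMatrixNorm {n : ℕ} (N : Mat n → ℝ) : Prop :=
  (∀ A, N A = 0 ↔ A = 0) ∧
  (∀ (c : ℂ) (A : Mat n), N (c • A) = ‖c‖ * N A) ∧
  (∀ A B : Mat n, N (A + B) ≤ N A + N B)

/-- A set of matrices is C*-convex. -/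
def CStarConvex {n : ℕ} (K : Set (Mat n)) : Prop :=
  ∀ (k : ℕ) (C A : Fin k → Mat n), (∀ i, A i ∈ K) →
    (∑ i, (C i)ᴴ * C i = 1) → (∑ i, (C i)ᴴ * A i * C i) ∈ K

/-- `N` is an M-norm. -/
def IsMNorm {n : ℕ} (N : Mat n → ℝ) : Prop :=
  ∀ (k : ℕ) (C X : Fin k → Mat n), (∑ i, (C i)ᴴ * C i = 1) →
    N (∑ i, (C i)ᴴ * X i * C i) ≤ ⨆ i, N (X i)

/-- `N` is an L-norm. -/
def IsLNorm {n : ℕ} (N : Mat n → ℝ) : Prop :=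
  ∀ (k : ℕ) (C : Fin k → Mat n) (X : Mat n), (∑ i, (C i)ᴴ * C i = 1) →
    ∑ i, N (C i * X * (C i)ᴴ) ≤ N X

/-- The dual norm with respect to the pairing `⟨Y|X⟩ = Tr(Yᴴ X)`. -/
noncomputable def dualNorm {n : ℕ} (N : Mat n → ℝ) (Y : Mat n) : ℝ :=
  sSup {r | ∃ X : Mat n, N X ≤ 1 ∧ r = ‖(Yᴴ * X).trace‖}

/-- The operator (spectral) norm of a matrix. -/
noncomputable def opNorm {n : ℕ} (A : Mat n) : ℝ :=
  ‖Matrix.toEuclideanCLM (𝕜 := ℂ) (n := Fin n) A‖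

/-- The positive semidefinite square root, as `Matrix.PosSemidef.sqrt` was defined in the older Mathlib. -/
noncomputable def posSemidefSqrt {m : Type*} [Fintype m] [DecidableEq m] {𝕜 : Type*} [RCLike 𝕜]
    {A : Matrix m m 𝕜} (hA : A.PosSemidef) : Matrix m m 𝕜 :=
  hA.1.eigenvectorUnitary.1 * diagonal ((↑) ∘ (√·) ∘ hA.1.eigenvalues) *
  (star hA.1.eigenvectorUnitary : Matrix m m 𝕜)

/-- The trace norm `‖A‖₁ = Tr((AᴴA)^{1/2})`. -/
noncomputable def traceNorm {n : ℕ} (A : Mat n) : ℝ :=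
  (posSemidefSqrt (Matrix.posSemidef_conjTranspose_mul_self A)).trace.re

/-- The numerical radius. -/
noncomputable def numRadius {n : ℕ} (A : Mat n) : ℝ :=
  sSup {r | ∃ x : EuclideanSpace ℂ (Fin n), ‖x‖ = 1 ∧
    r = ‖inner ℂ x (Matrix.toEuclideanCLM (𝕜 := ℂ) (n := Fin n) A x)‖}

section Aux

variable {n : ℕ} (N : Mat n → ℝ) (hN : IsMatrixNorm N)

include hN in
lemma N_nonneg (A : Mat n) : 0 ≤ N A := by
  have h0 : N 0 = 0 := (hN.1 0).2 rfl
  have hneg : N (-A) = N A := by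
    have := hN.2.1 (-1) A; simpa using this
  have h2 : N 0 ≤ N A + N (-A) := by
    have := hN.2.2 A (-A); simpa using this
  rw [h0, hneg] at h2; linarith

omit hN in
lemma trace_conj_cycle (A B Z : Mat n) :
    ((Aᴴ * B * A)ᴴ * Z).trace = (Bᴴ * (A * Z * Aᴴ)).trace := by
  rw [Matrix.conjTranspose_mul, Matrix.conjTranspose_mul,
    Matrix.conjTranspose_conjTranspose, Matrix.mul_assoc, Matrix.trace_mul_comm]
  simp [Matrix.mul_assoc]

/-- The group norm on `Mat n` induced by `N`. -/
noncomputable def matNNorm (hN : IsMatrixNorm N) : AddGroupNorm (Mat n) where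
  toFun := N
  map_zero' := (hN.1 0).2 rfl
  add_le' := hN.2.2
  neg' := fun A => by have := hN.2.1 (-1) A; simpa using this
  eq_zero_of_map_eq_zero' := fun A h => (hN.1 A).1 h

/-- The pairing functional `X ↦ Tr(Yᴴ X)` as a linear map. -/
noncomputable def pairLM (Y : Mat n) : Mat n →ₗ[ℂ] ℂ where
  toFun := fun X => (Yᴴ * X).trace
  map_add' := fun A B => by
    show (Yᴴ * (A + B)).trace = (Yᴴ * A).trace + (Yᴴ * B).trace
    rw [Matrix.mul_add, Matrix.trace_add]
  map_smul' := fun c A => by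
    show (Yᴴ * (c • A)).trace = c * (Yᴴ * A).trace
    rw [Matrix.mul_smul, Matrix.trace_smul]; rfl

include hN in
lemma pair_bound (Y : Mat n) :
    ∃ M : ℝ, 0 ≤ M ∧ ∀ X : Mat n, ‖(Yᴴ * X).trace‖ ≤ M * N X := by
  letI instN : NormedAddCommGroup (Mat n) := (matNNorm N hN).toNormedAddCommGroup
  letI : PseudoMetricSpace (Mat n) := instN.toMetricSpace.toPseudoMetricSpace
  letI : UniformSpace (Mat n) := PseudoMetricSpace.toUniformSpace
  letI : TopologicalSpace (Mat n) := UniformSpace.toTopologicalSpace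
  letI : NormedSpace ℂ (Mat n) :=
    ⟨fun c x => le_of_eq (by
      show N (c • x) = ‖c‖ * N x
      rw [hN.2.1 c x])⟩
  let g := LinearMap.toContinuousLinearMap (pairLM Y)
  refine ⟨‖g‖, norm_nonneg _, fun X => ?_⟩
  have h := g.le_opNorm X
  have hx : ‖X‖ = N X := rfl
  have hg : g X = (Yᴴ * X).trace := rfl
  rw [hx, hg] at h
  simpa using h

include hN in
lemma dual_bddAbove (Y : Mat n) :
    BddAbove {r | ∃ X : Mat n, N X ≤ 1 ∧ r = ‖(Yᴴ * X).trace‖} := by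
  obtain ⟨M, hM0, hM⟩ := pair_bound N hN Y
  refine ⟨M, ?_⟩
  rintro r ⟨X, hX, rfl⟩
  calc ‖(Yᴴ * X).trace‖ ≤ M * N X := hM X
    _ ≤ M * 1 := mul_le_mul_of_nonneg_left hX hM0
    _ = M := mul_one M

lemma dual_mem_zero (Y : Mat n) (hN : IsMatrixNorm N) :
    (0 : ℝ) ∈ {r | ∃ X : Mat n, N X ≤ 1 ∧ r = ‖(Yᴴ * X).trace‖} :=
  ⟨0, by rw [(hN.1 0).2 rfl]; norm_num, by simp⟩

include hN in
lemma dual_nonneg (Y : Mat n) : 0 ≤ dualNorm N Y :=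
  le_csSup (dual_bddAbove N hN Y) (dual_mem_zero N Y hN)

omit hN in
lemma dual_le {Y : Mat n} {c : ℝ} (hc : 0 ≤ c)
    (h : ∀ X : Mat n, N X ≤ 1 → ‖(Yᴴ * X).trace‖ ≤ c) :
    dualNorm N Y ≤ c := by
  apply Real.sSup_le _ hc
  rintro r ⟨X, hX, rfl⟩
  exact h X hX

include hN in
lemma le_dual (Y X : Mat n) :
    ‖(Yᴴ * X).trace‖ ≤ dualNorm N Y * N X := by
  rcases eq_or_ne (N X) 0 with h0 | h0
  · have hX : X = 0 := (hN.1 X).1 h0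
    have hz : N (0 : Mat n) = 0 := (hN.1 0).2 rfl
    simp [hX, hz]
  · have hpos : 0 < N X := lt_of_le_of_ne (N_nonneg N hN X) (Ne.symm h0)
    set X' : Mat n := ((N X : ℂ))⁻¹ • X with hX'
    have hNX' : N X' = 1 := by
      rw [hX', hN.2.1, norm_inv, Complex.norm_real, Real.norm_eq_abs, abs_of_pos hpos]
      field_simp
    have hmem : ‖(Yᴴ * X').trace‖
        ∈ {r | ∃ Z : Mat n, N Z ≤ 1 ∧ r = ‖(Yᴴ * Z).trace‖} :=
      ⟨X', le_of_eq hNX', rfl⟩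
    have hle : ‖(Yᴴ * X').trace‖ ≤ dualNorm N Y :=
      le_csSup (dual_bddAbove N hN Y) hmem
    have htr : ‖(Yᴴ * X').trace‖
        = (N X)⁻¹ * ‖(Yᴴ * X).trace‖ := by
      rw [hX', Matrix.mul_smul, Matrix.trace_smul, smul_eq_mul, norm_mul,
        norm_inv, Complex.norm_real, Real.norm_eq_abs, abs_of_pos hpos]
    rw [htr] at hle
    calc ‖(Yᴴ * X).trace‖
        = ((N X)⁻¹ * ‖(Yᴴ * X).trace‖) * N X := by field_simp
      _ ≤ dualNorm N Y * N X := mul_le_mul_of_nonneg_right hle (le_of_lt hpos)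

include hN in
lemma exists_dual_achieves (X : Mat n) :
    ∃ Y : Mat n, dualNorm N Y ≤ 1 ∧ ((Yᴴ * X).trace) = ((N X : ℝ) : ℂ) := by
  rcases eq_or_ne X 0 with rfl | hX0
  · refine ⟨0, ?_, by simp [(hN.1 0).2 rfl]⟩
    apply dual_le N zero_le_one
    intro Z _; simp
  · letI instN : NormedAddCommGroup (Mat n) := (matNNorm N hN).toNormedAddCommGroup
    letI : PseudoMetricSpace (Mat n) := instN.toMetricSpace.toPseudoMetricSpace
    letI : UniformSpace (Mat n) := PseudoMetricSpace.toUniformSpace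
    letI : TopologicalSpace (Mat n) := UniformSpace.toTopologicalSpace
    letI : NormedSpace ℂ (Mat n) :=
      ⟨fun c x => le_of_eq (by
        show N (c • x) = ‖c‖ * N x
        rw [hN.2.1 c x])⟩
    obtain ⟨g, hg1, hgx⟩ := exists_dual_vector ℂ X (norm_ne_zero_iff.mpr hX0)
    set Y : Mat n := Matrix.of fun i j =>
      (starRingEnd ℂ) (g (Matrix.single i j 1)) with hY
    have hrep : ∀ Z : Mat n, (Yᴴ * Z).trace = g Z := by
      intro Z
      have htr : (Yᴴ * Z).trace = ∑ k, ∑ i, (starRingEnd ℂ) (Y i k) * Z i k := by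
        simp [Matrix.trace, Matrix.mul_apply, Matrix.diag, Matrix.conjTranspose_apply]
      have hgZ : g Z = ∑ i, ∑ j, Z i j * g (Matrix.single i j 1) := by
        conv_lhs => rw [Matrix.matrix_eq_sum_single Z]
        rw [map_sum]
        congr 1; funext i
        rw [map_sum]
        congr 1; funext j
        rw [show Matrix.single i j (Z i j)
            = (Z i j) • Matrix.single i j 1 by
          rw [Matrix.smul_single]; simp]
        rw [_root_.map_smul, smul_eq_mul]
      rw [htr, Finset.sum_comm, hgZ]
      congr 1; funext i
      congr 1; funext j
      simp [hY, mul_comm]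
    refine ⟨Y, ?_, ?_⟩
    · apply dual_le N zero_le_one
      intro Z hZ
      rw [hrep Z]
      calc ‖g Z‖ = ‖g Z‖ := rfl
        _ ≤ ‖g‖ * ‖Z‖ := g.le_opNorm _
        _ = N Z := by rw [hg1, one_mul]; rfl
        _ ≤ 1 := hZ
    · rw [hrep X, hgx]; rfl

end Aux

theorem isLNorm_iff_dual_isMNorm {n : ℕ} (N : Mat n → ℝ)
    (hN : IsMatrixNorm N) :
    IsLNorm N ↔ IsMNorm (dualNorm N) := by
  constructor
  · intro hL k C X hC
    set S := ⨆ i, dualNorm N (X i) with hS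
    have hS0 : 0 ≤ S := Real.iSup_nonneg fun i => dual_nonneg N hN _
    apply dual_le N hS0
    intro Z hZ
    have htr : (((∑ i, (C i)ᴴ * X i * C i)ᴴ) * Z).trace
        = ∑ i, ((X i)ᴴ * (C i * Z * (C i)ᴴ)).trace := by
      rw [Matrix.conjTranspose_sum, Finset.sum_mul, Matrix.trace_sum]
      congr 1; funext i
      exact trace_conj_cycle (C i) (X i) Z
    rw [htr]
    calc ‖∑ i, ((X i)ᴴ * (C i * Z * (C i)ᴴ)).trace‖
        ≤ ∑ i, ‖((X i)ᴴ * (C i * Z * (C i)ᴴ)).trace‖ := by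
          exact norm_sum_le _ _
      _ ≤ ∑ i, dualNorm N (X i) * N (C i * Z * (C i)ᴴ) := by
          apply Finset.sum_le_sum
          intro i _; exact le_dual N hN _ _
      _ ≤ ∑ i, S * N (C i * Z * (C i)ᴴ) := by
          apply Finset.sum_le_sum
          intro i _
          apply mul_le_mul_of_nonneg_right _ (N_nonneg N hN _)
          rw [hS]
          exact le_ciSup (f := fun j => dualNorm N (X j)) (Set.Finite.bddAbove (Set.finite_range _)) i
      _ = S * ∑ i, N (C i * Z * (C i)ᴴ) := by rw [Finset.mul_sum]
      _ ≤ S * N Z := mul_le_mul_of_nonneg_left (hL k C Z hC) hS0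
      _ ≤ S * 1 := mul_le_mul_of_nonneg_left hZ hS0
      _ = S := mul_one S
  · intro hM k C X hC
    rcases Nat.eq_zero_or_pos k with rfl | hk
    · simpa using N_nonneg N hN X
    have hne : Nonempty (Fin k) := ⟨⟨0, hk⟩⟩
    choose Y hY1 hY2 using fun i => exists_dual_achieves N hN (C i * X * (C i)ᴴ)
    set T : Mat n := ∑ i, (C i)ᴴ * Y i * C i with hT
    have htr : ((Tᴴ) * X).trace = ((∑ i, N (C i * X * (C i)ᴴ) : ℝ) : ℂ) := by
      rw [hT, Matrix.conjTranspose_sum, Finset.sum_mul, Matrix.trace_sum]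
      push_cast
      congr 1; funext i
      rw [trace_conj_cycle (C i) (Y i) X]
      exact hY2 i
    have hsum0 : 0 ≤ ∑ i, N (C i * X * (C i)ᴴ) :=
      Finset.sum_nonneg fun i _ => N_nonneg N hN _
    have habs : ‖(Tᴴ * X).trace‖ = ∑ i, N (C i * X * (C i)ᴴ) := by
      rw [htr, Complex.norm_real, Real.norm_eq_abs, abs_of_nonneg hsum0]
    calc ∑ i, N (C i * X * (C i)ᴴ)
        = ‖(Tᴴ * X).trace‖ := habs.symm
      _ ≤ dualNorm N T * N X := le_dual N hN _ _
      _ ≤ (⨆ i, dualNorm N (Y i)) * N X :=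
          mul_le_mul_of_nonneg_right (hM k C Y hC) (N_nonneg N hN X)
      _ ≤ 1 * N X := by
          apply mul_le_mul_of_nonneg_right _ (N_nonneg N hN X)
          exact ciSup_le hY1
      _ = N X := one_mul _
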